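/- Let A = U · fromBlocks T S 0 N · Uᴴ be a core-EP decomposition of the square complex matrix A, let G = U · fromBlocks T⁻¹ 0 0 0 · Uᴴ be its core-EP inverse, and let W = U · fromBlocks T⁻¹ (T⁻¹·T⁻¹·S) 0 0 · Uᴴ be its WG inverse. Then for every square complex matrix B of the same size: (G·A = G·B and A·G = B·G) if and only if (A·W = B·W and Aᴴ·W = Bᴴ·W). That is, A is below B in the core-EP order if and only if A·A^WG = B·A^WG and Aᴴ·A^WG = Bᴴ·A^WG. -/

import Mathlib

open Matrix

/-- For `A = U · fromBlocks T S 0 N · Uᴴ` with core-EP inverse `G` and WG inverse `W`,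
and any `B` of the same size: `A` is below `B` in the core-EP order
(`G·A = G·B` and `A·G = B·G`) if and only if `A·W = B·W` and `Aᴴ·W = Bᴴ·W`. -/
theorem coreEP_order_iff_wg {m p : Type*}
    [Fintype m] [Fintype p] [DecidableEq m] [DecidableEq p]
    (U : Matrix (m ⊕ p) (m ⊕ p) ℂ) (T : Matrix m m ℂ) (S : Matrix m p ℂ) (N : Matrix p p ℂ)
    (hU : U * Uᴴ = 1) (hU' : Uᴴ * U = 1) (hT : IsUnit T) (hN : IsNilpotent N)
    (A G W : Matrix (m ⊕ p) (m ⊕ p) ℂ)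
    (hA : A = U * Matrix.fromBlocks T S 0 N * Uᴴ)
    (hG : G = U * Matrix.fromBlocks T⁻¹ 0 0 0 * Uᴴ)
    (hW : W = U * Matrix.fromBlocks T⁻¹ (T⁻¹ * T⁻¹ * S) 0 0 * Uᴴ) :
    ∀ B : Matrix (m ⊕ p) (m ⊕ p) ℂ,
      (G * A = G * B ∧ A * G = B * G) ↔ (A * W = B * W ∧ Aᴴ * W = Bᴴ * W) := by
  intro B
  have hdet : IsUnit T.det := (Matrix.isUnit_iff_isUnit_det T).mp hT
  have hTi : T * T⁻¹ = 1 := Matrix.mul_nonsing_inv T hdet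
  have hiT : T⁻¹ * T = 1 := Matrix.nonsing_inv_mul T hdet
  have hB : B = U * (Uᴴ * B * U) * Uᴴ := by
    rw [show U * (Uᴴ * B * U) * Uᴴ = (U * Uᴴ) * B * (U * Uᴴ) from by noncomm_ring, hU,
      one_mul, mul_one]
  have hmul : ∀ P Q : Matrix (m ⊕ p) (m ⊕ p) ℂ,
      (U * P * Uᴴ) * (U * Q * Uᴴ) = U * (P * Q) * Uᴴ := by
    intro P Q
    rw [show (U * P * Uᴴ) * (U * Q * Uᴴ) = U * (P * ((Uᴴ * U) * Q)) * Uᴴ from by noncomm_ring,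
      hU', one_mul, Matrix.mul_assoc]
  have hinj : ∀ P Q : Matrix (m ⊕ p) (m ⊕ p) ℂ, U * P * Uᴴ = U * Q * Uᴴ ↔ P = Q := by
    intro P Q
    constructor
    · intro h
      have h2 := congrArg (fun M => Uᴴ * M * U) h
      rw [show Uᴴ * (U * P * Uᴴ) * U = (Uᴴ * U) * P * (Uᴴ * U) from by noncomm_ring,
        show Uᴴ * (U * Q * Uᴴ) * U = (Uᴴ * U) * Q * (Uᴴ * U) from by noncomm_ring, hU'] at h2
      simpa using h2
    · rintro rfl; rfl
  obtain ⟨x11, x12, x21, x22, hX⟩ :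
      ∃ a b c d, Uᴴ * B * U = Matrix.fromBlocks a b c d :=
    ⟨_, _, _, _, (Matrix.fromBlocks_toBlocks (Uᴴ * B * U)).symm⟩
  rw [hX] at hB
  rw [hA, hG, hW, hB]
  have hct : ∀ (P : Matrix m m ℂ) (Q : Matrix m p ℂ) (R : Matrix p m ℂ) (O : Matrix p p ℂ),
      (U * Matrix.fromBlocks P Q R O * Uᴴ)ᴴ = U * Matrix.fromBlocks Pᴴ Rᴴ Qᴴ Oᴴ * Uᴴ := by
    intro P Q R O
    rw [Matrix.conjTranspose_mul, Matrix.conjTranspose_mul, Matrix.conjTranspose_conjTranspose,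
      Matrix.fromBlocks_conjTranspose, Matrix.mul_assoc]
  rw [hct, hct]
  simp only [hmul, hinj, Matrix.fromBlocks_multiply, Matrix.conjTranspose_zero]
  simp only [Matrix.mul_zero, Matrix.zero_mul, add_zero, zero_add, mul_zero, zero_mul,
    Matrix.fromBlocks_inj]
  constructor
  · rintro ⟨⟨h1, h2, -, -⟩, ⟨h3, -, h4, -⟩⟩
    have e11 : x11 = T := by
      have := congrArg (fun M => M * T) h3.symm
      simpa [Matrix.mul_assoc, hiT, hTi] using this
    have e21 : x21 = 0 := by
      have := congrArg (fun M => M * T) h4.symm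
      simpa [Matrix.mul_assoc, hiT, hTi] using this
    have e12 : x12 = S := by
      have := congrArg (fun M => T * M) h2.symm
      simpa [← Matrix.mul_assoc, hiT, hTi] using this
    subst e11; subst e21; subst e12
    simp
  · rintro ⟨⟨h1, -, h2, -⟩, ⟨h3, -, h4, -⟩⟩
    have e11 : x11 = T := by
      have := congrArg (fun M => M * T) h1.symm
      simpa [Matrix.mul_assoc, hiT, hTi] using this
    have e21 : x21 = 0 := by
      have := congrArg (fun M => M * T) h2.symm
      simpa [Matrix.mul_assoc, hiT, hTi] using this
    have e12 : x12 = S := by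
      have h4' := congrArg (fun M => M * T) h4.symm
      simp only [Matrix.mul_assoc, hiT, Matrix.mul_one] at h4'
      have := congrArg Matrix.conjTranspose h4'
      simpa using this
    subst e11; subst e21; subst e12
    simp
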